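/- Suppose $\varphi_k > 0$ and symmetric matrices $P_1,\dots,P_r, M$ satisfy $P(\alpha) \succ 0$, $P_k + M \succeq 0$ for all $k$, and $\sum_{k=1}^r \varphi_k (P_k + M) + P(\alpha)A(\alpha) + A(\alpha)^T P(\alpha) \prec 0$ for all $\alpha \in \Lambda_r$. Then for any $\alpha \in \Lambda_r$ and any real numbers $d_1,\dots,d_r$ with $\sum_k d_k = 0$ and $|d_k| \le \varphi_k$, one has $\sum_{k=1}^r d_k P_k + P(\alpha)A(\alpha) + A(\alpha)^T P(\alpha) \prec 0$. -/

import Mathlib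

open Matrix BigOperators

def unitSimplex (r : ℕ) : Set (Fin r → ℝ) :=
  {α | (∑ i, α i) = 1 ∧ ∀ i, 0 ≤ α i ∧ α i ≤ 1}

def NegDef {n : ℕ} (M : Matrix (Fin n) (Fin n) ℝ) : Prop :=
  ∀ x : Fin n → ℝ, x ≠ 0 → x ⬝ᵥ M *ᵥ x < 0

lemma quad_sum {n r : ℕ} (N : Fin r → Matrix (Fin n) (Fin n) ℝ) (c : Fin r → ℝ)
    (x : Fin n → ℝ) :
    x ⬝ᵥ (∑ k, c k • N k) *ᵥ x = ∑ k, c k * (x ⬝ᵥ (N k) *ᵥ x) := by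
  simp only [mulVec, dotProduct, Finset.sum_apply, Matrix.sum_apply, Matrix.smul_apply,
    smul_eq_mul, Finset.mul_sum, Finset.sum_mul, Finset.mul_sum]
  calc ∑ a : Fin n, ∑ b : Fin n, ∑ i : Fin r, x a * (c i * N i a b * x b)
      = ∑ a : Fin n, ∑ i : Fin r, ∑ b : Fin n, x a * (c i * N i a b * x b) :=
        Finset.sum_congr rfl fun a _ => Finset.sum_comm
    _ = ∑ i : Fin r, ∑ a : Fin n, ∑ b : Fin n, x a * (c i * N i a b * x b) :=
        Finset.sum_comm
    _ = ∑ i : Fin r, ∑ a : Fin n, ∑ b : Fin n, c i * (x a * (N i a b * x b)) :=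
        Finset.sum_congr rfl fun k _ => Finset.sum_congr rfl fun a _ =>
          Finset.sum_congr rfl fun b _ => by ring

theorem stmt19 {n r : ℕ} (A P : Fin r → Matrix (Fin n) (Fin n) ℝ)
    (hPsymm : ∀ i, (P i).IsSymm) (M : Matrix (Fin n) (Fin n) ℝ) (hM : M.IsSymm)
    (φ : Fin r → ℝ) (hφ : ∀ k, 0 < φ k)
    (hPpos : ∀ α ∈ unitSimplex r, (∑ i, α i • P i).PosDef)
    (hPM : ∀ k, (P k + M).PosSemidef)
    (hlmi : ∀ α ∈ unitSimplex r,
      NegDef ((∑ k, φ k • (P k + M))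
        + (∑ i, α i • P i) * (∑ i, α i • A i)
        + (∑ i, α i • A i)ᵀ * (∑ i, α i • P i))) :
    ∀ α ∈ unitSimplex r, ∀ d : Fin r → ℝ, (∑ k, d k) = 0 → (∀ k, |d k| ≤ φ k) →
      NegDef ((∑ k, d k • P k)
        + (∑ i, α i • P i) * (∑ i, α i • A i)
        + (∑ i, α i • A i)ᵀ * (∑ i, α i • P i)) := by
  intro α hα d hd hdφ x hx
  have hBig := hlmi α hα x hx
  set B := (∑ i, α i • P i) * (∑ i, α i • A i)
        + (∑ i, α i • A i)ᵀ * (∑ i, α i • P i) with hB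
  have hq : ∀ k, 0 ≤ x ⬝ᵥ (P k + M) *ᵥ x := by
    intro k
    have := (hPM k).dotProduct_mulVec_nonneg x
    simpa using this
  have hle : x ⬝ᵥ (∑ k, d k • P k) *ᵥ x ≤ x ⬝ᵥ (∑ k, φ k • (P k + M)) *ᵥ x := by
    rw [quad_sum, quad_sum]
    have heq : ∑ k, d k * (x ⬝ᵥ (P k) *ᵥ x) = ∑ k, d k * (x ⬝ᵥ (P k + M) *ᵥ x) := by
      have : ∑ k, d k * (x ⬝ᵥ (P k + M) *ᵥ x)
          = ∑ k, d k * (x ⬝ᵥ (P k) *ᵥ x) + (∑ k, d k) * (x ⬝ᵥ M *ᵥ x) := by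
        rw [Finset.sum_mul, ← Finset.sum_add_distrib]
        refine Finset.sum_congr rfl fun k _ => ?_
        simp [Matrix.add_mulVec, dotProduct_add, mul_add]
      rw [this, hd]; ring
    rw [heq]
    apply Finset.sum_le_sum
    intro k _
    exact mul_le_mul_of_nonneg_right ((le_abs_self _).trans (hdφ k)) (hq k)
  have expand : ∀ C : Matrix (Fin n) (Fin n) ℝ,
      x ⬝ᵥ (C + B) *ᵥ x = x ⬝ᵥ C *ᵥ x + x ⬝ᵥ B *ᵥ x := by
    intro C
    simp [Matrix.add_mulVec, dotProduct_add]
  have h1 : x ⬝ᵥ ((∑ k, φ k • (P k + M)) + B) *ᵥ x < 0 := by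
    rw [expand]
    have := hBig
    rw [add_assoc] at this
    rw [expand] at this
    exact this
  rw [add_assoc, expand]
  rw [expand] at h1
  linarith
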